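/- Let 𝓕 be an ω-closed family of nonempty inductive subsets of ω and let S = B_ω^𝓕 ∪ {0} be B_ω^𝓕 with an adjoined zero, equipped with a Hausdorff locally compact shift-continuous topology in which 0 is not an isolated point. Then for every neighbourhood U of 0 in S there exists F ∈ 𝓕 such that the set U ∩ B_ω^{F} is infinite. -/

import Mathlib

/-- For `n : ℕ` and `F ⊆ ω`, `wShift n F` is the set `(−n)+F = {x ∈ ω : x + n ∈ F}`. -/
def wShift (n : ℕ) (F : Set ℕ) : Set ℕ := {x | x + n ∈ F}

/-- A family `𝓕` of subsets of `ω` is ω-closed if `F₁ ∩ ((−n)+F₂) ∈ 𝓕`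
for all `n ∈ ω` and `F₁, F₂ ∈ 𝓕`. -/
def OmegaClosed (𝓕 : Set (Set ℕ)) : Prop :=
  ∀ n : ℕ, ∀ F₁ ∈ 𝓕, ∀ F₂ ∈ 𝓕, F₁ ∩ wShift n F₂ ∈ 𝓕

/-- A subset `F ⊆ ω` is inductive if `n ∈ F` implies `n+1 ∈ F`. -/
def InductiveSet (F : Set ℕ) : Prop := ∀ n : ℕ, n ∈ F → n + 1 ∈ F

/-- The underlying set `ω × ω × 𝓕` of the semigroup `B_ω^𝓕`. -/
abbrev BF (𝓕 : Set (Set ℕ)) : Type := ℕ × ℕ × {F : Set ℕ // F ∈ 𝓕}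

/-- The multiplication of the semigroup `B_ω^𝓕`:
`(i₁,j₁,F₁)·(i₂,j₂,F₂) = (i₁−j₁+i₂, j₂, ((j₁−i₂)+F₁) ∩ F₂)` if `j₁ ≤ i₂`, and
`(i₁, j₁−i₂+j₂, F₁ ∩ ((i₂−j₁)+F₂))` if `j₁ ≥ i₂`. -/
def BFmul {𝓕 : Set (Set ℕ)} (h : OmegaClosed 𝓕) (a b : BF 𝓕) : BF 𝓕 :=
  if a.2.1 ≤ b.1 then
    (a.1 + (b.1 - a.2.1), b.2.1,
      ⟨wShift (b.1 - a.2.1) a.2.2.1 ∩ b.2.2.1, by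
        rw [Set.inter_comm]; exact h _ _ b.2.2.2 _ a.2.2.2⟩)
  else
    (a.1, b.2.1 + (a.2.1 - b.1),
      ⟨a.2.2.1 ∩ wShift (a.2.1 - b.1) b.2.2.1, h _ _ a.2.2.2 _ b.2.2.2⟩)

/-- `B_ω^𝓕` with an adjoined zero; `none` plays the role of the zero `0`. -/
abbrev BF0 (𝓕 : Set (Set ℕ)) : Type := Option (BF 𝓕)

/-- The multiplication of the semigroup `B_ω^𝓕` with an adjoined zero. -/
def BF0mul {𝓕 : Set (Set ℕ)} (h : OmegaClosed 𝓕) : BF0 𝓕 → BF0 𝓕 → BF0 𝓕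
  | some a, some b => some (BFmul h a b)
  | _, _ => none

section helpers
lemma wShift_Ici (n k : ℕ) : wShift n (Set.Ici k) = Set.Ici (k - n) := by
  ext x; simp only [wShift, Set.mem_Ici, Set.mem_setOf_eq]; omega

lemma wShift_zero (F : Set ℕ) : wShift 0 F = F := by ext x; simp [wShift]

lemma inductive_Ici (F : Set ℕ) (hFi : InductiveSet F) (hFn : F.Nonempty) :
    F = Set.Ici (sInf F) := by
  apply Set.Subset.antisymm
  · intro x hx; exact Nat.sInf_le hx
  · intro x hx
    have h0 : sInf F ∈ F := Nat.sInf_mem hFn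
    have hd : ∀ d, sInf F + d ∈ F := by
      intro d; induction d with
      | zero => simpa using h0
      | succ d ih => exact hFi _ ih
    have := hd (x - sInf F)
    rwa [Nat.add_sub_cancel' hx] at this

variable {𝓕 : Set (Set ℕ)} (hcl : OmegaClosed 𝓕)

lemma BFmul_fst (a b : BF 𝓕) :
    (BFmul hcl a b).1 = if a.2.1 ≤ b.1 then a.1 + (b.1 - a.2.1) else a.1 := by
  unfold BFmul; split <;> rfl

lemma BFmul_snd (a b : BF 𝓕) :
    (BFmul hcl a b).2.1 = if a.2.1 ≤ b.1 then b.2.1 else b.2.1 + (a.2.1 - b.1) := by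
  unfold BFmul; split <;> rfl

lemma BFmul_thd (a b : BF 𝓕) :
    (BFmul hcl a b).2.2.1 = if a.2.1 ≤ b.1 then wShift (b.1 - a.2.1) a.2.2.1 ∩ b.2.2.1
      else a.2.2.1 ∩ wShift (a.2.1 - b.1) b.2.2.1 := by
  unfold BFmul; split <;> rfl

lemma BF_ext_iff (x y : BF 𝓕) :
    x = y ↔ x.1 = y.1 ∧ x.2.1 = y.2.1 ∧ x.2.2.1 = y.2.2.1 := by
  constructor
  · rintro rfl; exact ⟨rfl, rfl, rfl⟩
  · rintro ⟨h1, h2, h3⟩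
    obtain ⟨x1, x2, x3⟩ := x; obtain ⟨y1, y2, y3⟩ := y
    simp_all [Prod.ext_iff, Subtype.ext_iff]

lemma absorb_left (F : Set ℕ) (a₀ : ℕ) (hlow : ∀ x ∈ F, a₀ ≤ x) (d : ℕ) :
    wShift d (Set.Ici a₀) ∩ F = F := by
  apply Set.inter_eq_self_of_subset_right
  intro x hx
  simp only [wShift, Set.mem_setOf_eq, Set.mem_Ici]
  exact le_trans (hlow x hx) (Nat.le_add_right _ _)

lemma absorb_right (F : Set ℕ) (a₀ : ℕ) (hlow : ∀ x ∈ F, a₀ ≤ x) (d : ℕ) :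
    F ∩ wShift d (Set.Ici a₀) = F := by
  rw [Set.inter_comm]; exact absorb_left F a₀ hlow d

lemma BF0mul_some_some (a b : BF 𝓕) :
    BF0mul hcl (some a) (some b) = some (BFmul hcl a b) := rfl
lemma BF0mul_some_none (a : BF 𝓕) : BF0mul hcl (some a) none = none := rfl
lemma Ici_eq_Ici {a b : ℕ} (h : a = b) : Set.Ici a = Set.Ici b := by rw [h]

lemma BF0mul_none_left (x : BF0 𝓕) : BF0mul hcl none x = none := by
  cases x <;> rfl
end helpers

/-- Lemma 3.2: if `S = B_ω^𝓕 ∪ {0}` carries a Hausdorff locally compact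
shift-continuous topology with nonisolated zero, then every neighbourhood `U` of
the zero meets some `B_ω^{F} = {(i,j,F) : i,j ∈ ω}`, `F ∈ 𝓕`, in an infinite set. -/
theorem statement6 (𝓕 : Set (Set ℕ)) (hcl : OmegaClosed 𝓕)
    (hne : ∀ F ∈ 𝓕, F.Nonempty) (hind : ∀ F ∈ 𝓕, InductiveSet F)
    (τ : TopologicalSpace (BF0 𝓕)) (hT2 : @T2Space _ τ)
    (hlc : @LocallyCompactSpace _ τ)
    (hsc : ∀ a : BF0 𝓕, @Continuous _ _ τ τ (fun x => BF0mul hcl a x) ∧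
        @Continuous _ _ τ τ (fun x => BF0mul hcl x a))
    (hni : ¬ @IsOpen _ τ {(none : BF0 𝓕)})
    (U : Set (BF0 𝓕)) (hU : U ∈ @nhds _ τ none) :
    ∃ F : Set ℕ, ∃ hF : F ∈ 𝓕,
      (U ∩ {x : BF0 𝓕 | ∃ i j : ℕ, x = some (i, j, ⟨F, hF⟩)}).Infinite := by
  classical
  letI := τ
  haveI := hT2
  haveI := hlc
  by_contra hcon
  push_neg at hcon
  have hfin : ∀ (F : Set ℕ) (hF : F ∈ 𝓕),
      (U ∩ {x : BF0 𝓕 | ∃ i j : ℕ, x = some (i, j, ⟨F, hF⟩)}).Finite := by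
    intro F hF; exact hcon F hF
  -- 𝓕 is nonempty
  have hFne : 𝓕.Nonempty := by
    by_contra h
    rw [Set.not_nonempty_iff_eq_empty] at h
    apply hni
    have huniv : ({none} : Set (BF0 𝓕)) = Set.univ := by
      ext x
      cases x with
      | none => simp
      | some b => exact absurd b.2.2.2 (by simp [h])
    rw [huniv]; exact isOpen_univ
  have hIci : ∀ F ∈ 𝓕, F = Set.Ici (sInf F) :=
    fun F hF => inductive_Ici F (hind F hF) (hne F hF)
  -- the minimal fiber
  set A : Set ℕ := {k | Set.Ici k ∈ 𝓕} with hAdef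
  have hAne : A.Nonempty := by
    obtain ⟨F, hF⟩ := hFne
    exact ⟨sInf F, by show Set.Ici (sInf F) ∈ 𝓕; rw [← hIci F hF]; exact hF⟩
  obtain ⟨a₀, ha₀def⟩ : ∃ a, sInf A = a := ⟨_, rfl⟩
  have hF₀ : Set.Ici a₀ ∈ 𝓕 := by rw [← ha₀def]; exact Nat.sInf_mem hAne
  have hlow : ∀ F ∈ 𝓕, ∀ x ∈ F, a₀ ≤ x := by
    intro F hF x hx
    have h1 : sInf F ∈ A := by show Set.Ici (sInf F) ∈ 𝓕; rw [← hIci F hF]; exact hF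
    rw [← ha₀def]
    exact le_trans (Nat.sInf_le h1) (Nat.sInf_le hx)
  have hlowInf : ∀ F ∈ 𝓕, a₀ ≤ sInf F := by
    intro F hF
    exact hlow F hF _ (Nat.sInf_mem (hne F hF))
  set F₀e : {F : Set ℕ // F ∈ 𝓕} := ⟨Set.Ici a₀, hF₀⟩ with hF₀e
  -- every point of B is isolated
  have hsubIci : ∀ Fh : {F : Set ℕ // F ∈ 𝓕}, Fh.1 ⊆ Set.Ici a₀ :=
    fun Fh x hx => hlow _ Fh.2 x hx
  have keyL : ∀ (m : ℕ) (b : BF 𝓕), BFmul hcl (m, m, F₀e) b = b ↔ m ≤ b.1 := by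
    intro m b
    rw [BF_ext_iff, BFmul_fst hcl, BFmul_snd hcl, BFmul_thd hcl]
    show ((if m ≤ b.1 then m + (b.1 - m) else m) = b.1 ∧
        (if m ≤ b.1 then b.2.1 else b.2.1 + (m - b.1)) = b.2.1 ∧
        (if m ≤ b.1 then wShift (b.1 - m) (Set.Ici a₀) ∩ b.2.2.1
          else Set.Ici a₀ ∩ wShift (m - b.1) b.2.2.1) = b.2.2.1) ↔ m ≤ b.1
    by_cases hm : m ≤ b.1
    · simp only [if_pos hm]
      constructor
      · intro _; exact hm
      · intro _
        exact ⟨by omega, True.intro, absorb_left _ _ (fun x hx => hlow _ b.2.2.2 x hx) _⟩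
    · simp only [if_neg hm]
      constructor
      · rintro ⟨-, h2, -⟩; omega
      · intro h; exact absurd h hm
  have keyR : ∀ (m : ℕ) (b : BF 𝓕), BFmul hcl b (m, m, F₀e) = b ↔ m ≤ b.2.1 := by
    intro m b
    rw [BF_ext_iff, BFmul_fst hcl, BFmul_snd hcl, BFmul_thd hcl]
    show ((if b.2.1 ≤ m then b.1 + (m - b.2.1) else b.1) = b.1 ∧
        (if b.2.1 ≤ m then m else m + (b.2.1 - m)) = b.2.1 ∧
        (if b.2.1 ≤ m then wShift (m - b.2.1) b.2.2.1 ∩ Set.Ici a₀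
          else b.2.2.1 ∩ wShift (b.2.1 - m) (Set.Ici a₀)) = b.2.2.1) ↔ m ≤ b.2.1
    by_cases hm : b.2.1 ≤ m
    · simp only [if_pos hm]
      constructor
      · rintro ⟨-, h2, -⟩; omega
      · intro h
        have hme : m - b.2.1 = 0 := by omega
        refine ⟨by omega, by omega, ?_⟩
        rw [hme, wShift_zero]
        exact Set.inter_eq_self_of_subset_left (hsubIci b.2.2)
    · simp only [if_neg hm]
      constructor
      · intro _; omega
      · intro _
        exact ⟨True.intro, by omega, absorb_right _ _ (fun x hx => hlow _ b.2.2.2 x hx) _⟩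
  have keyG : ∀ (g' : ℕ) (hg : Set.Ici g' ∈ 𝓕) (b : BF 𝓕),
      BFmul hcl (0, 0, ⟨Set.Ici g', hg⟩) b = b ↔ g' ≤ sInf b.2.2.1 + b.1 := by
    intro g' hg b
    rw [BF_ext_iff, BFmul_fst hcl, BFmul_snd hcl, BFmul_thd hcl]
    show ((if 0 ≤ b.1 then 0 + (b.1 - 0) else 0) = b.1 ∧
        (if 0 ≤ b.1 then b.2.1 else b.2.1 + (0 - b.1)) = b.2.1 ∧
        (if 0 ≤ b.1 then wShift (b.1 - 0) (Set.Ici g') ∩ b.2.2.1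
          else Set.Ici g' ∩ wShift (0 - b.1) b.2.2.1) = b.2.2.1) ↔ g' ≤ sInf b.2.2.1 + b.1
    simp only [if_pos (Nat.zero_le b.1)]
    rw [wShift_Ici]
    constructor
    · rintro ⟨-, -, h3⟩
      have hss : b.2.2.1 ⊆ Set.Ici (g' - (b.1 - 0)) := by
        intro x hx
        rw [← h3] at hx
        exact hx.1
      have h4 := hss (Nat.sInf_mem (hne _ b.2.2.2))
      simp only [Set.mem_Ici] at h4
      omega
    · intro h
      refine ⟨by omega, True.intro, ?_⟩
      apply Set.inter_eq_self_of_subset_right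
      intro x hx
      have h5 := Nat.sInf_le hx
      simp only [Set.mem_Ici]
      omega
  have hVfin : ∀ (M N R : ℕ),
      {x : BF0 𝓕 | ∃ b : BF 𝓕, x = some b ∧ b.1 ≤ M ∧ b.2.1 ≤ N ∧ sInf b.2.2.1 ≤ R}.Finite := by
    intro M N R
    have hsub : {x : BF0 𝓕 | ∃ b : BF 𝓕, x = some b ∧ b.1 ≤ M ∧ b.2.1 ≤ N ∧ sInf b.2.2.1 ≤ R}
        ⊆ (fun b : BF 𝓕 => (some b : BF0 𝓕)) ''
          {b : BF 𝓕 | b.1 ≤ M ∧ b.2.1 ≤ N ∧ sInf b.2.2.1 ≤ R} := by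
      rintro x ⟨b, rfl, h1, h2, h3⟩
      exact ⟨b, ⟨h1, h2, h3⟩, rfl⟩
    apply Set.Finite.subset ?_ hsub
    apply Set.Finite.image
    apply Set.Finite.of_finite_image
      (f := fun b : BF 𝓕 => (b.1, b.2.1, sInf b.2.2.1))
    · apply Set.Finite.subset
        (((Set.finite_Iic M).prod ((Set.finite_Iic N).prod (Set.finite_Iic R))))
      rintro x ⟨b, ⟨h1, h2, h3⟩, rfl⟩
      exact ⟨h1, h2, h3⟩
    · rintro b1 hb1 b2 hb2 heq
      simp only [Prod.mk.injEq] at heq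
      obtain ⟨e1, e2, e3⟩ := heq
      rw [BF_ext_iff]
      refine ⟨e1, e2, ?_⟩
      rw [hIci _ b1.2.2.2, hIci _ b2.2.2.2, e3]
  have hiso : ∀ p : BF 𝓕, IsOpen {(some p : BF0 𝓕)} := by
    intro p
    have hop1 : IsOpen {x : BF0 𝓕 | BF0mul hcl (some (p.1 + 1, p.1 + 1, F₀e)) x = x}ᶜ :=
      (isClosed_eq (hsc _).1 continuous_id).isOpen_compl
    have hop2 : IsOpen {x : BF0 𝓕 | BF0mul hcl x (some (p.2.1 + 1, p.2.1 + 1, F₀e)) = x}ᶜ :=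
      (isClosed_eq (hsc _).2 continuous_id).isOpen_compl
    have hVex : ∃ V : Set (BF0 𝓕), IsOpen V ∧ some p ∈ V ∧ V.Finite := by
      by_cases hbig : ∃ g', Set.Ici g' ∈ 𝓕 ∧ sInf p.2.2.1 + p.1 < g'
      · obtain ⟨g', hg', hgBig⟩ := hbig
        have hop3 : IsOpen {x : BF0 𝓕 | BF0mul hcl (some (0, 0, ⟨Set.Ici g', hg'⟩)) x = x}ᶜ :=
          (isClosed_eq (hsc _).1 continuous_id).isOpen_compl
        refine ⟨_, (hop1.inter hop2).inter hop3, ⟨⟨?_, ?_⟩, ?_⟩, ?_⟩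
        · simp only [Set.mem_compl_iff, Set.mem_setOf_eq, BF0mul_some_some, Option.some_inj, keyL]
          omega
        · simp only [Set.mem_compl_iff, Set.mem_setOf_eq, BF0mul_some_some, Option.some_inj, keyR]
          omega
        · simp only [Set.mem_compl_iff, Set.mem_setOf_eq, BF0mul_some_some, Option.some_inj, keyG]
          omega
        · apply (hVfin p.1 p.2.1 g').subset
          rintro x ⟨⟨hx1, hx2⟩, hx3⟩
          simp only [Set.mem_compl_iff, Set.mem_setOf_eq] at hx1 hx2 hx3
          cases x with
          | none => exact absurd rfl hx1
          | some b =>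
            rw [BF0mul_some_some, Option.some_inj, keyL] at hx1
            rw [BF0mul_some_some, Option.some_inj, keyR] at hx2
            rw [BF0mul_some_some, Option.some_inj, keyG] at hx3
            exact ⟨b, rfl, by omega, by omega, by omega⟩
      · push_neg at hbig
        refine ⟨_, hop1.inter hop2, ⟨?_, ?_⟩, ?_⟩
        · simp only [Set.mem_compl_iff, Set.mem_setOf_eq, BF0mul_some_some, Option.some_inj, keyL]
          omega
        · simp only [Set.mem_compl_iff, Set.mem_setOf_eq, BF0mul_some_some, Option.some_inj, keyR]
          omega
        · apply (hVfin p.1 p.2.1 (sInf p.2.2.1 + p.1)).subset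
          rintro x ⟨hx1, hx2⟩
          simp only [Set.mem_compl_iff, Set.mem_setOf_eq] at hx1 hx2
          cases x with
          | none => exact absurd rfl hx1
          | some b =>
            rw [BF0mul_some_some, Option.some_inj, keyL] at hx1
            rw [BF0mul_some_some, Option.some_inj, keyR] at hx2
            have hbA : Set.Ici (sInf b.2.2.1) ∈ 𝓕 := by
              rw [← hIci _ b.2.2.2]; exact b.2.2.2
            exact ⟨b, rfl, by omega, by omega, hbig _ hbA⟩
    obtain ⟨V, hVo, hpV, hVf⟩ := hVex
    have heq : {(some p : BF0 𝓕)} = V ∩ (V \ {some p})ᶜ := by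
      ext x
      simp only [Set.mem_singleton_iff, Set.mem_inter_iff, Set.mem_compl_iff, Set.mem_diff,
        not_and, not_not]
      constructor
      · rintro rfl
        exact ⟨hpV, fun _ => rfl⟩
      · rintro ⟨h1, h2⟩
        exact h2 h1
    rw [heq]
    exact hVo.inter hVf.diff.isClosed.isOpen_compl
  -- compact neighbourhood
  obtain ⟨K, hKn, hKU, hKc⟩ := LocallyCompactSpace.local_compact_nhds (none : BF0 𝓕) U hU
  have cofin : ∀ V : Set (BF0 𝓕), IsOpen V → none ∈ V → (K \ V).Finite := by
    intro V hV hnV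
    set u : BF0 𝓕 → Set (BF0 𝓕) := fun y => if y = none then V else {y} with hu
    have huo : ∀ y, IsOpen (u y) := by
      intro y
      cases y with
      | none => simpa [hu] using hV
      | some b => simpa [hu] using hiso b
    have hcov : K ⊆ ⋃ y, u y := by
      intro x _
      apply Set.mem_iUnion.2 ⟨x, ?_⟩
      cases x with
      | none => simpa [hu] using hnV
      | some b => simp [hu]
    obtain ⟨t, ht⟩ := hKc.elim_finite_subcover u huo hcov
    apply t.finite_toSet.subset
    intro x hx
    have hx2 := ht hx.1
    rw [Set.mem_iUnion₂] at hx2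
    obtain ⟨y, hyt, hxy⟩ := hx2
    cases y with
    | none => exact absurd (by simpa [hu] using hxy) hx.2
    | some b =>
      have : x = some b := by simpa [hu] using hxy
      rwa [this]
  have hKinf : (K \ {none}).Infinite := by
    by_contra h
    rw [Set.not_infinite] at h
    apply hni
    have hop : IsOpen (interior K ∩ (K \ {none})ᶜ) :=
      isOpen_interior.inter h.isClosed.isOpen_compl
    have heq : ({none} : Set (BF0 𝓕)) = interior K ∩ (K \ {none})ᶜ := by
      ext x
      constructor
      · intro hx
        rw [Set.mem_singleton_iff] at hx
        subst hx
        exact ⟨mem_interior_iff_mem_nhds.2 hKn, fun hc => hc.2 rfl⟩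
      · rintro ⟨h1, h2⟩
        by_contra hxn
        exact h2 ⟨interior_subset h1, hxn⟩
    rw [heq]; exact hop
  have unb : ∀ N : ℕ, ∃ p : BF 𝓕, some p ∈ K ∧ N < sInf p.2.2.1 := by
    intro N
    by_contra h
    push_neg at h
    apply hKinf
    have hsub : K \ {none} ⊆ ⋃ k ∈ Set.Iic N,
        (U ∩ {x : BF0 𝓕 | ∃ i j : ℕ, ∃ hk : Set.Ici k ∈ 𝓕, x = some (i, j, ⟨Set.Ici k, hk⟩)}) := by
      rintro x ⟨hxK, hxn⟩
      cases x with
      | none => exact absurd rfl hxn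
      | some p =>
        apply Set.mem_biUnion (show sInf p.2.2.1 ∈ Set.Iic N from h p hxK)
        refine ⟨hKU hxK, p.1, p.2.1, ?_, ?_⟩
        · rw [← hIci _ p.2.2.2]; exact p.2.2.2
        · congr 1
          rw [BF_ext_iff]
          exact ⟨rfl, rfl, hIci _ p.2.2.2⟩
    apply Set.Finite.subset ?_ hsub
    apply Set.Finite.biUnion (Set.finite_Iic N)
    intro k _
    by_cases hk : Set.Ici k ∈ 𝓕
    · apply (hfin _ hk).subset
      rintro x ⟨hxU, i, j, hk2, hx⟩
      exact ⟨hxU, i, j, hx⟩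
    · apply Set.Finite.subset (Set.finite_empty)
      rintro x ⟨hxU, i, j, hk2, hx⟩
      exact absurd hk2 hk
  -- the shift map
  set aE : BF 𝓕 := (0, 1, F₀e) with haE
  set G : BF0 𝓕 → BF0 𝓕 := fun x => BF0mul hcl (some aE) x with hG
  have hGc : Continuous G := (hsc (some aE)).1
  set E : Set (BF0 𝓕) := K \ G ⁻¹' (interior K) with hE
  have hEfin : E.Finite := by
    apply cofin
    · exact hGc.isOpen_preimage _ isOpen_interior
    · show G none ∈ interior K
      have : G none = none := rfl
      rw [this]
      exact mem_interior_iff_mem_nhds.2 hKn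
  set P : Set (BF0 𝓕) := K ∩ {x | ∃ i j : ℕ, x = some (i, j, F₀e)} with hP
  have hPfin : P.Finite := by
    apply (hfin _ hF₀).subset
    intro x hx
    exact ⟨hKU hx.1, hx.2⟩
  set Jk : BF0 𝓕 → ℕ := fun x => match x with
    | none => 0
    | some y => y.2.1 + sInf y.2.2.1 with hJk
  have main : ∀ p : BF 𝓕, some p ∈ K → a₀ < sInf p.2.2.1 →
      ∃ y : BF0 𝓕, y ∈ E ∪ P ∧ Jk y = p.2.1 + sInf p.2.2.1 := by
    rintro ⟨i, j, Fs⟩ hpK hpk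
    obtain ⟨k, hkdef⟩ : ∃ k, sInf Fs.1 = k := ⟨_, rfl⟩
    have ha₀k : a₀ < k := by rw [← hkdef]; exact hpk
    have hFsk : Fs.1 = Set.Ici k := by rw [← hkdef]; exact hIci _ Fs.2
    set q : ℕ → BF 𝓕 := fun t => (fun y => BFmul hcl aE y)^[t] (i, j, Fs) with hqdef
    have hq0 : q 0 = (i, j, Fs) := rfl
    have hqs : ∀ t, q (t+1) = BFmul hcl aE (q t) := by
      intro t; rw [hqdef]; exact Function.iterate_succ_apply' _ _ _
    have sfst : ∀ b : BF 𝓕, (BFmul hcl aE b).1 = b.1 - 1 := by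
      intro b
      rw [BFmul_fst hcl]
      show (if 1 ≤ b.1 then 0 + (b.1 - 1) else 0) = b.1 - 1
      split <;> omega
    have ssnd : ∀ b : BF 𝓕, (BFmul hcl aE b).2.1 =
        if 1 ≤ b.1 then b.2.1 else b.2.1 + 1 := by
      intro b
      rw [BFmul_snd hcl]
      show (if 1 ≤ b.1 then b.2.1 else b.2.1 + (1 - b.1)) = _
      split <;> omega
    have sthd : ∀ b : BF 𝓕, (BFmul hcl aE b).2.2.1 =
        if 1 ≤ b.1 then wShift (b.1 - 1) (Set.Ici a₀) ∩ b.2.2.1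
        else Set.Ici a₀ ∩ wShift (1 - b.1) b.2.2.1 := by
      intro b
      rw [BFmul_thd hcl]
    have Inv : ∀ t, (q t).1 = i - t ∧ (q t).2.1 = j + (t - i) ∧
        (q t).2.2.1 = Set.Ici (max a₀ (k - (t - i))) := by
      intro t
      induction t with
      | zero =>
        rw [hq0]
        refine ⟨by simp, by simp, ?_⟩
        show Fs.1 = _
        rw [hFsk]
        exact Ici_eq_Ici (by omega)
      | succ t ih =>
        obtain ⟨h1, h2, h3⟩ := ih
        rw [hqs t]
        refine ⟨?_, ?_, ?_⟩
        · rw [sfst, h1]; omega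
        · rw [ssnd, h1, h2]; split <;> omega
        · rw [sthd, h1, h3, wShift_Ici, wShift_Ici, Set.Ici_inter_Ici, Set.Ici_inter_Ici]
          split <;> exact Ici_eq_Ici (by omega)
    obtain ⟨T, hTdef⟩ : ∃ T, T = i + (k - a₀) := ⟨_, rfl⟩
    by_cases hEx : ∃ t, t < T ∧ some (q t) ∈ E
    · obtain ⟨t, htT, htE⟩ := hEx
      refine ⟨some (q t), Or.inl htE, ?_⟩
      show (q t).2.1 + sInf (q t).2.2.1 = j + sInf Fs.1
      rw [hkdef, (Inv t).2.1, (Inv t).2.2, csInf_Ici]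
      omega
    · push_neg at hEx
      have hall : ∀ t, t ≤ T → some (q t) ∈ K := by
        intro t
        induction t with
        | zero => intro _; exact hpK
        | succ t ih =>
          intro ht
          have htT : t < T := by omega
          have hqK : some (q t) ∈ K := ih (le_of_lt htT)
          have hnotE : some (q t) ∉ E := hEx t htT
          have hpre : some (q t) ∈ G ⁻¹' interior K := by
            by_contra hcc
            exact hnotE ⟨hqK, hcc⟩
          have h4 : G (some (q t)) = some (q (t+1)) := by
            show BF0mul hcl (some aE) (some (q t)) = _
            rw [BF0mul_some_some, ← hqs]
          exact interior_subset (by rw [← h4]; exact hpre)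
      refine ⟨some (q T), Or.inr ⟨hall T le_rfl, (q T).1, (q T).2.1, ?_⟩, ?_⟩
      · congr 1
        rw [BF_ext_iff]
        refine ⟨rfl, rfl, ?_⟩
        show (q T).2.2.1 = Set.Ici a₀
        rw [(Inv T).2.2]
        exact Ici_eq_Ici (by omega)
      · show (q T).2.1 + sInf (q T).2.2.1 = j + sInf Fs.1
        rw [hkdef, (Inv T).2.1, (Inv T).2.2, csInf_Ici]
        omega
  -- build the sequence
  set f : BF 𝓕 → BF 𝓕 := fun p => (unb (p.2.1 + sInf p.2.2.1)).choose with hfdef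
  set s : ℕ → BF 𝓕 := fun n => f^[n] (unb a₀).choose with hsdef
  have hss : ∀ n, s (n+1) = f (s n) := by
    intro n; rw [hsdef]; exact Function.iterate_succ_apply' _ _ _
  have hbase : ∀ n, some (s n) ∈ K ∧ a₀ < sInf (s n).2.2.1 := by
    intro n
    induction n with
    | zero => exact (unb a₀).choose_spec
    | succ n ih =>
      have hsp : some (f (s n)) ∈ K ∧
          (s n).2.1 + sInf (s n).2.2.1 < sInf (f (s n)).2.2.1 :=
        (unb ((s n).2.1 + sInf (s n).2.2.1)).choose_spec
      rw [hss n]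
      refine ⟨hsp.1, ?_⟩
      have h2 := hsp.2
      have h3 := ih.2
      omega
  have hcn : ∀ n, (s n).2.1 + sInf (s n).2.2.1 < (s (n+1)).2.1 + sInf (s (n+1)).2.2.1 := by
    intro n
    have hsp : some (f (s n)) ∈ K ∧
        (s n).2.1 + sInf (s n).2.2.1 < sInf (f (s n)).2.2.1 :=
      (unb ((s n).2.1 + sInf (s n).2.2.1)).choose_spec
    rw [hss n]
    have := hsp.2
    omega
  set c : ℕ → ℕ := fun n => (s n).2.1 + sInf (s n).2.2.1 with hcdef
  have hmono : StrictMono c := strictMono_nat_of_lt_succ hcn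
  choose y hy hyJ using fun n => main (s n) (hbase n).1 (hbase n).2
  have hyinj : Function.Injective y := by
    intro n m hnm
    apply hmono.injective
    show c n = c m
    rw [show c n = Jk (y n) from (hyJ n).symm, show c m = Jk (y m) from (hyJ m).symm, hnm]
  exact Set.infinite_range_of_injective hyinj
    ((hEfin.union hPfin).subset (Set.range_subset_iff.2 hy))
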